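/- Let s, k be integers with s ≥ 1 and k ≥ 0. Let U = {x ∈ ℤ^s : x_1 + ⋯ + x_s = 0}, let C_k = {x ∈ U : ‖x‖₁ ≤ 2k}, let C be a subset of C_k, and let D = O(C) = ∪_{i=1}^s (C + e_i). If C is finite, then |D| ≥ ((s−k)/(k+1)) |C|. -/

import Mathlib

open Finset

set_option maxHeartbeats 1000000 in
theorem stmt_8 (s k : ℕ) (hs : 1 ≤ s) (C : Finset (Fin s → ℤ))
    (hC : ∀ x ∈ C, (∑ i, x i) = 0 ∧ (∑ i, |x i|) ≤ 2 * (k : ℤ)) :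
    ((s : ℝ) - k) / ((k : ℝ) + 1) * C.card ≤
      ((Finset.univ.biUnion fun i : Fin s =>
        C.image fun x => x + Pi.single i 1).card : ℝ) := by
  set D := Finset.univ.biUnion fun i : Fin s =>
      C.image fun x => x + Pi.single i 1 with hDdef
  -- Main integer inequality
  have key : ((s : ℤ) - k) * C.card ≤ ((k : ℤ) + 1) * D.card := by
    -- per-element lower bound on C : at most k negative coordinates
    have hA : ∀ x ∈ C, ((s : ℤ) - k) ≤ ((univ.filter fun i => 0 ≤ x i).card : ℤ) := by
      intro x hx
      obtain ⟨h0, h1⟩ := hC x hx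
      set N := univ.filter fun i => x i < 0 with hN
      have hsplit : ∑ i, (|x i| - x i) = ∑ i ∈ N, (2 * (-x i)) := by
        rw [← Finset.sum_filter_add_sum_filter_not univ (fun i => x i < 0)
          (fun i => |x i| - x i)]
        have h2 : ∑ i ∈ univ.filter (fun i => ¬ x i < 0), (|x i| - x i) = 0 := by
          apply Finset.sum_eq_zero
          intro i hi
          simp only [Finset.mem_filter, not_lt] at hi
          rw [abs_of_nonneg hi.2]; ring
        rw [h2, add_zero]
        apply Finset.sum_congr rfl
        intro i hi
        simp only [hN, Finset.mem_filter] at hi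
        rw [abs_of_neg hi.2]; ring
      have hsumN : ∑ i ∈ N, (-x i) ≤ (k : ℤ) := by
        have h3 : ∑ i, (|x i| - x i) ≤ 2 * (k : ℤ) := by
          rw [Finset.sum_sub_distrib, h0, sub_zero]; exact h1
        rw [hsplit, ← Finset.mul_sum] at h3
        linarith
      have hcardN : (N.card : ℤ) ≤ (k : ℤ) := by
        calc (N.card : ℤ) = ∑ _i ∈ N, (1 : ℤ) := by simp
          _ ≤ ∑ i ∈ N, (-x i) := by
              apply Finset.sum_le_sum
              intro i hi
              simp only [hN, Finset.mem_filter] at hi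
              omega
          _ ≤ (k : ℤ) := hsumN
      have hcards : (univ.filter fun i => 0 ≤ x i).card + N.card = s := by
        have h4 := Finset.card_filter_add_card_filter_not
          (s := (univ : Finset (Fin s))) (p := fun i => 0 ≤ x i)
        simp only [Finset.card_univ, Fintype.card_fin] at h4
        have e1 : (univ.filter fun a => ¬ 0 ≤ x a) = N := by
          rw [hN]; apply Finset.filter_congr; intro i _; simp [not_le]
        rw [e1] at h4
        exact h4
      have : ((univ.filter fun i => 0 ≤ x i).card : ℤ) + (N.card : ℤ) = (s : ℤ) := by
        exact_mod_cast hcards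
      linarith
    -- per-element upper bound on D : at most k+1 coordinates with y i ≥ 1
    have hB : ∀ y : Fin s → ℤ,
        ((univ.filter fun i => 1 ≤ y i ∧ y - Pi.single i 1 ∈ C).card : ℤ) ≤ (k : ℤ) + 1 := by
      intro y
      by_cases hne : (univ.filter fun i => 1 ≤ y i ∧ y - Pi.single i 1 ∈ C).Nonempty
      · obtain ⟨j, hj⟩ := hne
        rw [Finset.mem_filter] at hj
        obtain ⟨-, hj1, hjC⟩ := hj
        obtain ⟨hz0, hz1⟩ := hC _ hjC
        have hsingle : ∑ i, (Pi.single j 1 : Fin s → ℤ) i = 1 := by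
          simp [Pi.single_apply]
        simp only [Pi.sub_apply] at hz0 hz1
        rw [Finset.sum_sub_distrib, hsingle] at hz0
        have hy0 : ∑ i, y i = 1 := by linarith
        have hy1 : ∑ i, |y i| ≤ 2 * (k : ℤ) + 1 := by
          have habs : ∑ i, |(Pi.single j 1 : Fin s → ℤ) i| = 1 := by
            simp [Pi.single_apply, apply_ite abs]
          have step : ∑ i, |y i|
              ≤ ∑ i, (|y i - (Pi.single j 1 : Fin s → ℤ) i|
                + |(Pi.single j 1 : Fin s → ℤ) i|) := by
            apply Finset.sum_le_sum
            intro i _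
            have h5 : y i = (y i - (Pi.single j 1 : Fin s → ℤ) i)
                + (Pi.single j 1 : Fin s → ℤ) i := by ring
            nth_rewrite 1 [h5]; exact abs_add_le _ _
          rw [Finset.sum_add_distrib, habs] at step
          linarith
        set P := univ.filter fun i => 1 ≤ y i with hP
        have hsub : (univ.filter fun i => 1 ≤ y i ∧ y - Pi.single i 1 ∈ C) ⊆ P := by
          intro i hi
          rw [Finset.mem_filter] at hi
          rw [hP, Finset.mem_filter]
          exact ⟨hi.1, hi.2.1⟩
        have hcard1 : ((univ.filter fun i => 1 ≤ y i ∧ y - Pi.single i 1 ∈ C).card : ℤ)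
            ≤ (P.card : ℤ) := by exact_mod_cast Finset.card_le_card hsub
        have hsplit : ∑ i, (|y i| + y i) = ∑ i ∈ P, (2 * y i) := by
          rw [← Finset.sum_filter_add_sum_filter_not univ (fun i => 1 ≤ y i)
            (fun i => |y i| + y i)]
          have h2 : ∑ i ∈ univ.filter (fun i => ¬ 1 ≤ y i), (|y i| + y i) = 0 := by
            apply Finset.sum_eq_zero
            intro i hi
            simp only [Finset.mem_filter, not_le] at hi
            have : y i ≤ 0 := by omega
            rw [abs_of_nonpos this]; ring
          rw [h2, add_zero]
          apply Finset.sum_congr rfl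
          intro i hi
          simp only [hP, Finset.mem_filter] at hi
          rw [abs_of_pos (by omega : 0 < y i)]; ring
        have hsumP : ∑ i ∈ P, y i ≤ (k : ℤ) + 1 := by
          have h3 : ∑ i, (|y i| + y i) ≤ 2 * (k : ℤ) + 2 := by
            rw [Finset.sum_add_distrib, hy0]; linarith
          rw [hsplit, ← Finset.mul_sum] at h3
          linarith
        have hcard2 : (P.card : ℤ) ≤ ∑ i ∈ P, y i := by
          calc (P.card : ℤ) = ∑ _i ∈ P, (1 : ℤ) := by simp
            _ ≤ ∑ i ∈ P, y i := by
                apply Finset.sum_le_sum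
                intro i hi
                simp only [hP, Finset.mem_filter] at hi
                exact hi.2
        linarith
      · rw [Finset.not_nonempty_iff_eq_empty] at hne
        rw [hne]
        simp
        positivity
    -- injection for each coordinate i
    have hCi : ∀ i : Fin s, (C.filter fun x => 0 ≤ x i).card
        ≤ (D.filter fun y => 1 ≤ y i ∧ y - Pi.single i 1 ∈ C).card := by
      intro i
      apply Finset.card_le_card_of_injOn (fun x => x + Pi.single i 1)
      · intro x hx
        rw [Finset.mem_coe, Finset.mem_filter] at hx ⊢
        obtain ⟨hxC, hxi⟩ := hx
        refine ⟨?_, ?_, ?_⟩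
        · rw [hDdef]
          exact Finset.mem_biUnion.2 ⟨i, Finset.mem_univ i,
            Finset.mem_image_of_mem _ hxC⟩
        · simp only [Pi.add_apply, Pi.single_eq_same]
          omega
        · have : x + Pi.single i 1 - Pi.single i 1 = x := by ring
          rw [this]; exact hxC
      · intro a _ b _ h
        exact add_left_injective _ h
    -- sum swaps
    have swap1 : ∑ x ∈ C, (univ.filter fun i => 0 ≤ x i).card
        = ∑ i : Fin s, (C.filter fun x => 0 ≤ x i).card := by
      simp only [Finset.card_filter]
      rw [Finset.sum_comm]
    have swap2 : ∑ y ∈ D, (univ.filter fun i => 1 ≤ y i ∧ y - Pi.single i 1 ∈ C).card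
        = ∑ i : Fin s, (D.filter fun y => 1 ≤ y i ∧ y - Pi.single i 1 ∈ C).card := by
      simp only [Finset.card_filter]
      rw [Finset.sum_comm]
    calc ((s : ℤ) - k) * C.card = ∑ _x ∈ C, ((s : ℤ) - k) := by
          rw [Finset.sum_const]; ring
      _ ≤ ∑ x ∈ C, ((univ.filter fun i => 0 ≤ x i).card : ℤ) :=
          Finset.sum_le_sum hA
      _ = ((∑ x ∈ C, (univ.filter fun i => 0 ≤ x i).card : ℕ) : ℤ) := by push_cast; rfl
      _ = ((∑ i : Fin s, (C.filter fun x => 0 ≤ x i).card : ℕ) : ℤ) := by rw [swap1]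
      _ ≤ ((∑ i : Fin s, (D.filter fun y => 1 ≤ y i ∧ y - Pi.single i 1 ∈ C).card : ℕ) : ℤ) := by
          exact_mod_cast Finset.sum_le_sum fun i _ => hCi i
      _ = ((∑ y ∈ D, (univ.filter fun i => 1 ≤ y i ∧ y - Pi.single i 1 ∈ C).card : ℕ) : ℤ) := by
          rw [swap2]
      _ = ∑ y ∈ D, ((univ.filter fun i => 1 ≤ y i ∧ y - Pi.single i 1 ∈ C).card : ℤ) := by
          push_cast; rfl
      _ ≤ ∑ _y ∈ D, ((k : ℤ) + 1) := Finset.sum_le_sum fun y _ => hB y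
      _ = ((k : ℤ) + 1) * D.card := by rw [Finset.sum_const]; ring
  -- conclude over ℝ
  rw [div_mul_eq_mul_div, div_le_iff₀ (by positivity : (0:ℝ) < (k:ℝ) + 1)]
  have : (((s : ℤ) - k) * C.card : ℝ) ≤ (((k : ℤ) + 1) * D.card : ℝ) := by
    exact_mod_cast key
  push_cast at this ⊢
  linarith
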